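/- Let a > 0 be a real number and define φ : ℝ × ℝ → ℝ by φ(t,e) := t·log(1 + a·e/t) for t > 0 and φ(t,e) := 0 for t ≤ 0. Then φ is concave on the set {(t,e) ∈ ℝ × ℝ : t ≥ 0 and e ≥ 0}. -/

import Mathlib

open Real

private lemma key_stmt3 (a : ℝ) (ha : 0 < a) {t1 e1 t2 e2 c d : ℝ}
    (ht1 : 0 ≤ t1) (he1 : 0 ≤ e1) (ht2 : 0 ≤ t2) (he2 : 0 ≤ e2)
    (hc : 0 ≤ c) (hd : 0 ≤ d) (hcd : c + d = 1)
    (ht : 0 < c * t1 + d * t2) :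
    c * (if 0 < t1 then t1 * Real.log (1 + a * e1 / t1) else 0)
      + d * (if 0 < t2 then t2 * Real.log (1 + a * e2 / t2) else 0)
      ≤ (c * t1 + d * t2) * Real.log (1 + a * (c * e1 + d * e2) / (c * t1 + d * t2)) := by
  have hT : (0:ℝ) < c * t1 + d * t2 := ht
  have hTne : c * t1 + d * t2 ≠ 0 := ne_of_gt hT
  by_cases h1 : 0 < t1
  · by_cases h2 : 0 < t2
    · -- both positive: use concavity of log
      rw [if_pos h1, if_pos h2]
      set t := c * t1 + d * t2 with htdef
      have hx1 : (0:ℝ) < 1 + a * e1 / t1 := by positivity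
      have hx2 : (0:ℝ) < 1 + a * e2 / t2 := by positivity
      have hw1 : 0 ≤ c * t1 / t := by positivity
      have hw2 : 0 ≤ d * t2 / t := by positivity
      have hwsum : c * t1 / t + d * t2 / t = 1 := by
        field_simp
        exact htdef.symm
      have hconc := strictConcaveOn_log_Ioi.concaveOn.2 (Set.mem_Ioi.mpr hx1)
        (Set.mem_Ioi.mpr hx2) hw1 hw2 hwsum
      simp only [smul_eq_mul] at hconc
      have harg : c * t1 / t * (1 + a * e1 / t1) + d * t2 / t * (1 + a * e2 / t2)
          = 1 + a * (c * e1 + d * e2) / t := by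
        field_simp
        ring
      rw [harg] at hconc
      have := mul_le_mul_of_nonneg_left hconc (le_of_lt hT)
      calc c * (t1 * Real.log (1 + a * e1 / t1)) + d * (t2 * Real.log (1 + a * e2 / t2))
          = t * (c * t1 / t * Real.log (1 + a * e1 / t1)
              + d * t2 / t * Real.log (1 + a * e2 / t2)) := by
            field_simp
        _ ≤ t * Real.log (1 + a * (c * e1 + d * e2) / t) := this
    · -- t2 = 0
      have ht2z : t2 = 0 := le_antisymm (not_lt.mp h2) ht2
      rw [if_pos h1, if_neg h2]
      subst ht2z
      have hct1 : 0 < c * t1 := by linarith [mul_nonneg hd (le_refl (0:ℝ))]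
      have hcpos : 0 < c := by
        rcases hc.lt_or_eq with h | h
        · exact h
        · exfalso; rw [← h] at hct1; simp at hct1
      have harg1 : (0:ℝ) < 1 + a * e1 / t1 := by positivity
      have hle : 1 + a * e1 / t1 ≤ 1 + a * (c * e1 + d * e2) / (c * t1 + d * 0) := by
        have : a * e1 / t1 ≤ a * (c * e1 + d * e2) / (c * t1) := by
          rw [div_le_div_iff₀ h1 hct1]
          have : a * d * e2 * t1 ≥ 0 := by positivity
          nlinarith
        simpa using this
      have hlog := Real.log_le_log harg1 hle
      have : c * (t1 * Real.log (1 + a * e1 / t1))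
          ≤ (c * t1 + d * 0) * Real.log (1 + a * (c * e1 + d * e2) / (c * t1 + d * 0)) := by
        have h' := mul_le_mul_of_nonneg_left hlog (le_of_lt hct1)
        calc c * (t1 * Real.log (1 + a * e1 / t1))
            = c * t1 * Real.log (1 + a * e1 / t1) := by ring
          _ ≤ c * t1 * Real.log (1 + a * (c * e1 + d * e2) / (c * t1 + d * 0)) := h'
          _ = (c * t1 + d * 0) * Real.log (1 + a * (c * e1 + d * e2) / (c * t1 + d * 0)) := by ring
      linarith
  · -- t1 = 0
    have ht1z : t1 = 0 := le_antisymm (not_lt.mp h1) ht1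
    rw [if_neg h1]
    subst ht1z
    by_cases h2 : 0 < t2
    · rw [if_pos h2]
      have hdt2 : 0 < d * t2 := by
        simpa using hT
      have hdpos : 0 < d := by
        rcases hd.lt_or_eq with h | h
        · exact h
        · exfalso; rw [← h] at hdt2; simp at hdt2
      have harg2 : (0:ℝ) < 1 + a * e2 / t2 := by positivity
      have hle : 1 + a * e2 / t2 ≤ 1 + a * (c * e1 + d * e2) / (c * 0 + d * t2) := by
        have : a * e2 / t2 ≤ a * (c * e1 + d * e2) / (d * t2) := by
          rw [div_le_div_iff₀ h2 hdt2]
          nlinarith [mul_nonneg (mul_nonneg (mul_nonneg ha.le hc) he1) ht2]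
        simpa using this
      have hlog := Real.log_le_log harg2 hle
      have h' := mul_le_mul_of_nonneg_left hlog (le_of_lt hdt2)
      calc c * 0 + d * (t2 * Real.log (1 + a * e2 / t2))
          = d * t2 * Real.log (1 + a * e2 / t2) := by ring
        _ ≤ d * t2 * Real.log (1 + a * (c * e1 + d * e2) / (c * 0 + d * t2)) := h'
        _ = (c * 0 + d * t2) * Real.log (1 + a * (c * e1 + d * e2) / (c * 0 + d * t2)) := by ring
    · exfalso
      have ht2z : t2 = 0 := le_antisymm (not_lt.mp h2) ht2
      rw [ht2z] at hT
      simp at hT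

/-- For `a > 0`, the function `φ(t,e) = t·log(1 + a·e/t)` for `t > 0`,
`φ(t,e) = 0` for `t ≤ 0`, is concave on `{(t,e) : t ≥ 0, e ≥ 0}`. -/
theorem stmt3 (a : ℝ) (ha : 0 < a) (φ : ℝ × ℝ → ℝ)
    (hφ : ∀ p : ℝ × ℝ, φ p = if 0 < p.1 then p.1 * Real.log (1 + a * p.2 / p.1) else 0) :
    ConcaveOn ℝ {p : ℝ × ℝ | 0 ≤ p.1 ∧ 0 ≤ p.2} φ := by
  constructor
  · intro x hx y hy c d hc hd hcd
    refine ⟨?_, ?_⟩ <;> simp only [Prod.fst_add, Prod.snd_add, Prod.smul_fst, Prod.smul_snd,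
      smul_eq_mul]
    · exact add_nonneg (mul_nonneg hc hx.1) (mul_nonneg hd hy.1)
    · exact add_nonneg (mul_nonneg hc hx.2) (mul_nonneg hd hy.2)
  · intro p hp q hq c d hc hd hcd
    rw [hφ, hφ, hφ]
    simp only [Prod.fst_add, Prod.snd_add, Prod.smul_fst, Prod.smul_snd, smul_eq_mul]
    by_cases hT : 0 < c * p.1 + d * q.1
    · rw [if_pos hT]
      exact key_stmt3 a ha hp.1 hp.2 hq.1 hq.2 hc hd hcd hT
    · rw [if_neg hT]
      have h1 : c * p.1 = 0 := by
        have := mul_nonneg hc hp.1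
        have := mul_nonneg hd hq.1
        linarith [not_lt.mp hT]
      have h2 : d * q.1 = 0 := by
        have := mul_nonneg hc hp.1
        have := mul_nonneg hd hq.1
        linarith [not_lt.mp hT]
      have e1 : c * (if 0 < p.1 then p.1 * Real.log (1 + a * p.2 / p.1) else 0) = 0 := by
        rcases mul_eq_zero.mp h1 with h | h
        · rw [h]; ring
        · rw [if_neg (by rw [h]; exact lt_irrefl 0)]; ring
      have e2 : d * (if 0 < q.1 then q.1 * Real.log (1 + a * q.2 / q.1) else 0) = 0 := by
        rcases mul_eq_zero.mp h2 with h | h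
        · rw [h]; ring
        · rw [if_neg (by rw [h]; exact lt_irrefl 0)]; ring
      rw [e1, e2]; norm_num
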